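/- For m ≥ 1 and r ≥ 1, the volume of the convex hull of the ball S_m(r) = S_m(r,r) ⊂ ℤ^m (viewed as a subset of ℝ^m) equals (r^m / m!)·C(2m, m). -/

import Mathlib

open MeasureTheory Finset

noncomputable def Pc (m j : ℕ) : ℝ := (m.choose j : ℝ) / (j.factorial * (m - j).factorial)

noncomputable def Ppoly (m : ℕ) (a b : ℝ) : ℝ :=
  ∑ j ∈ Finset.range (m + 1), Pc m j * a ^ j * b ^ (m - j)

lemma Pc_nonneg (m j : ℕ) : 0 ≤ Pc m j := by
  unfold Pc; positivity

lemma Ppoly_nonneg {m : ℕ} {a b : ℝ} (ha : 0 ≤ a) (hb : 0 ≤ b) : 0 ≤ Ppoly m a b := by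
  unfold Ppoly
  refine Finset.sum_nonneg fun j _ => ?_
  have := Pc_nonneg m j
  positivity

lemma Ppoly_continuous (m : ℕ) (a : ℝ) : Continuous (fun t : ℝ => Ppoly m a t) := by
  unfold Ppoly; fun_prop

lemma Ppoly_continuous' (m : ℕ) (b : ℝ) : Continuous (fun t : ℝ => Ppoly m t b) := by
  unfold Ppoly; fun_prop

lemma int1 (m : ℕ) (a b : ℝ) (hb : 0 ≤ b) :
    ∫ t in Set.Icc (-b) 0, Ppoly m a (b + t) =
      ∑ j ∈ Finset.range (m + 1), Pc m j * a ^ j * (b ^ (m - j + 1) / ((m - j : ℕ) + 1)) := by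
  rw [MeasureTheory.integral_Icc_eq_integral_Ioc,
    ← intervalIntegral.integral_of_le (by linarith : (-b : ℝ) ≤ 0)]
  unfold Ppoly
  rw [intervalIntegral.integral_finset_sum (fun j _ => by
    apply Continuous.intervalIntegrable; fun_prop)]
  refine Finset.sum_congr rfl fun j _ => ?_
  have : (fun t : ℝ => Pc m j * a ^ j * (b + t) ^ (m - j)) =
      fun t : ℝ => (Pc m j * a ^ j) * ((b + t) ^ (m - j)) := rfl
  rw [this, intervalIntegral.integral_const_mul, intervalIntegral.integral_comp_add_left
    (fun u : ℝ => u ^ (m - j)) b, add_neg_cancel, add_zero, integral_pow]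
  rw [zero_pow (by omega), sub_zero]

lemma int2 (m : ℕ) (a b : ℝ) (ha : 0 ≤ a) :
    ∫ t in Set.Ioc 0 a, Ppoly m (a - t) b =
      ∑ j ∈ Finset.range (m + 1), Pc m j * (a ^ (j + 1) / ((j : ℕ) + 1)) * b ^ (m - j) := by
  rw [← intervalIntegral.integral_of_le ha]
  unfold Ppoly
  rw [intervalIntegral.integral_finset_sum (fun j _ => by
    apply Continuous.intervalIntegrable; fun_prop)]
  refine Finset.sum_congr rfl fun j _ => ?_
  have h1 : (fun t : ℝ => Pc m j * (a - t) ^ j * b ^ (m - j)) =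
      fun t : ℝ => (Pc m j * b ^ (m - j)) * ((a - t) ^ j) := by ext t; ring
  rw [h1, intervalIntegral.integral_const_mul, intervalIntegral.integral_comp_sub_left
    (fun u : ℝ => u ^ j) a, sub_self, sub_zero, integral_pow, zero_pow (by omega), sub_zero]
  ring

lemma key_alg (m : ℕ) (a b : ℝ) :
    (∑ j ∈ Finset.range (m+1), Pc m j * a ^ j * (b ^ (m - j + 1) / ((m - j : ℕ) + 1)))
    + (∑ j ∈ Finset.range (m+1), Pc m j * (a ^ (j+1) / ((j:ℕ)+1)) * b ^ (m - j))
    = Ppoly (m+1) a b := by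
  unfold Ppoly
  conv_rhs => rw [Finset.sum_range_succ']
  have hsplit : ∀ j ∈ Finset.range (m+1),
      Pc (m+1) (j+1) * a ^ (j+1) * b ^ (m + 1 - (j+1))
      = (Pc m j * (a ^ (j+1) / ((j:ℕ)+1)) * b ^ (m - j))
        + ((m.choose (j+1) : ℝ) / ((j+1).factorial * (m - j).factorial)) * a ^ (j+1) * b ^ (m - j) := by
    intro j hj
    rw [Finset.mem_range] at hj
    have e2 : m + 1 - (j + 1) = m - j := by omega
    rw [e2]
    unfold Pc
    rw [Nat.choose_succ_succ m j, Nat.factorial_succ (j)]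
    have h1 : (j.factorial : ℝ) ≠ 0 := Nat.cast_ne_zero.mpr (Nat.factorial_ne_zero j)
    have h2 : ((m - j).factorial : ℝ) ≠ 0 := Nat.cast_ne_zero.mpr (Nat.factorial_ne_zero _)
    have h3 : ((j : ℝ) + 1) ≠ 0 := by positivity
    push_cast
    field_simp
  rw [Finset.sum_congr rfl hsplit, Finset.sum_add_distrib]
  have hX : (∑ j ∈ Finset.range (m+1), Pc m j * a ^ j * (b ^ (m - j + 1) / ((m - j : ℕ) + 1)))
      = (∑ j ∈ Finset.range (m+1),
          ((m.choose (j+1) : ℝ) / ((j+1).factorial * (m - j).factorial)) * a ^ (j+1) * b ^ (m - j))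
        + Pc (m+1) 0 * a ^ 0 * b ^ (m + 1 - 0) := by
    rw [Finset.sum_range_succ' (fun j => Pc m j * a ^ j * (b ^ (m - j + 1) / ((m - j : ℕ) + 1))) m]
    rw [Finset.sum_range_succ]
    have hlast : ((m.choose (m+1) : ℝ) / ((m+1).factorial * (m - m).factorial)) * a ^ (m+1) * b ^ (m - m) = 0 := by
      rw [Nat.choose_eq_zero_of_lt (by omega)]
      simp
    rw [hlast, add_zero]
    congr 1
    · refine Finset.sum_congr rfl fun j hj => ?_
      rw [Finset.mem_range] at hj
      obtain ⟨n, hn⟩ : ∃ n, m - (j + 1) = n := ⟨_, rfl⟩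
      have h1 : m - j = n + 1 := by omega
      unfold Pc
      rw [hn, h1, Nat.factorial_succ n]
      have hf1 : ((j+1).factorial : ℝ) ≠ 0 := Nat.cast_ne_zero.mpr (Nat.factorial_ne_zero _)
      have hf2 : (n.factorial : ℝ) ≠ 0 := Nat.cast_ne_zero.mpr (Nat.factorial_ne_zero _)
      have hf3 : ((n : ℝ) + 1) ≠ 0 := by positivity
      push_cast
      field_simp
    · unfold Pc
      simp only [Nat.sub_zero, Nat.choose_zero_right, Nat.factorial_zero, pow_zero]
      rw [Nat.factorial_succ m]
      have hf2 : (m.factorial : ℝ) ≠ 0 := Nat.cast_ne_zero.mpr (Nat.factorial_ne_zero _)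
      have hf3 : ((m : ℝ) + 1) ≠ 0 := by positivity
      push_cast
      field_simp
  rw [hX]
  ring

lemma fubini_step (m : ℕ) (a b : ℝ) :
    volume {x : Fin (m+1) → ℝ | (∑ i, max (x i) 0) ≤ a ∧ (∑ i, max (-x i) 0) ≤ b}
    = ∫⁻ t : ℝ, volume {y : Fin m → ℝ |
        (∑ i, max (y i) 0) ≤ a - max t 0 ∧ (∑ i, max (-y i) 0) ≤ b - max (-t) 0} := by
  set T : Set (ℝ × (Fin m → ℝ)) :=
    {p | max p.1 0 + ∑ i, max (p.2 i) 0 ≤ a ∧ max (-p.1) 0 + ∑ i, max (-(p.2 i)) 0 ≤ b} with hT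
  have h1 : IsClosed {p : ℝ × (Fin m → ℝ) | max p.1 0 + ∑ i, max (p.2 i) 0 ≤ a} :=
    isClosed_le ((continuous_fst.max continuous_const).add
      (continuous_finset_sum _ fun i _ =>
        (((continuous_apply i).comp continuous_snd).max continuous_const))) continuous_const
  have h2 : IsClosed {p : ℝ × (Fin m → ℝ) | max (-p.1) 0 + ∑ i, max (-(p.2 i)) 0 ≤ b} :=
    isClosed_le ((continuous_fst.neg.max continuous_const).add
      (continuous_finset_sum _ fun i _ =>
        (((continuous_apply i).comp continuous_snd).neg.max continuous_const))) continuous_const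
  have hcl : IsClosed {p : ℝ × (Fin m → ℝ) |
      max p.1 0 + ∑ i, max (p.2 i) 0 ≤ a ∧ max (-p.1) 0 + ∑ i, max (-(p.2 i)) 0 ≤ b} :=
    h1.inter h2
  have hTm : MeasurableSet T := hT ▸ hcl.measurableSet
  have hpre : {x : Fin (m+1) → ℝ | (∑ i, max (x i) 0) ≤ a ∧ (∑ i, max (-x i) 0) ≤ b}
      = (MeasurableEquiv.piFinSuccAbove (fun _ : Fin (m+1) => ℝ) 0) ⁻¹' T := by
    ext x
    simp only [Set.mem_preimage, Set.mem_setOf_eq, MeasurableEquiv.piFinSuccAbove,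
      MeasurableEquiv.coe_mk, MeasurableEquiv.piFinSuccAbove_apply, hT]
    rw [Fin.sum_univ_succAbove (fun i => max (x i) 0) 0,
        Fin.sum_univ_succAbove (fun i => max (-(x i)) 0) 0]
    rfl
  rw [hpre, (MeasureTheory.volume_preserving_piFinSuccAbove (fun _ : Fin (m+1) => ℝ) 0).measure_preimage hTm.nullMeasurableSet]
  rw [MeasureTheory.Measure.volume_eq_prod, MeasureTheory.Measure.prod_apply hTm]
  congr 1
  ext t
  congr 1
  ext y
  simp only [Set.mem_preimage, Set.mem_setOf_eq, hT]
  constructor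
  · rintro ⟨h1, h2⟩; constructor <;> linarith
  · rintro ⟨h1, h2⟩; constructor <;> linarith

lemma vol_K (m : ℕ) : ∀ (a b : ℝ), 0 ≤ a → 0 ≤ b →
    volume {x : Fin m → ℝ | (∑ i, max (x i) 0) ≤ a ∧ (∑ i, max (-x i) 0) ≤ b}
      = ENNReal.ofReal (Ppoly m a b) := by
  induction m with
  | zero =>
    intro a b ha hb
    have h : {x : Fin 0 → ℝ | (∑ i, max (x i) 0) ≤ a ∧ (∑ i, max (-x i) 0) ≤ b} = Set.univ := by
      ext x
      simp only [Set.mem_setOf_eq, Set.mem_univ, iff_true, Finset.univ_eq_empty, Finset.sum_empty]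
      exact ⟨ha, hb⟩
    rw [h, MeasureTheory.volume_pi, MeasureTheory.Measure.pi_univ]
    simp [Ppoly, Pc]
  | succ m IH =>
    intro a b ha hb
    rw [fubini_step]
    set g : ℝ → ENNReal := fun t => volume {y : Fin m → ℝ |
        (∑ i, max (y i) 0) ≤ a - max t 0 ∧ (∑ i, max (-y i) 0) ≤ b - max (-t) 0} with hg
    have hg0 : ∀ t, t ∉ Set.Icc (-b) a → g t = 0 := by
      intro t ht
      rw [Set.mem_Icc, not_and_or] at ht
      have hempty : {y : Fin m → ℝ |
          (∑ i, max (y i) 0) ≤ a - max t 0 ∧ (∑ i, max (-y i) 0) ≤ b - max (-t) 0} = ∅ := by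
        rw [Set.eq_empty_iff_forall_notMem]
        intro y hy
        have s1 : (0:ℝ) ≤ ∑ i, max (y i) 0 :=
          Finset.sum_nonneg fun i _ => le_max_right _ _
        have s2 : (0:ℝ) ≤ ∑ i, max (-y i) 0 :=
          Finset.sum_nonneg fun i _ => le_max_right _ _
        rcases ht with h | h
        · push_neg at h
          have : -t ≤ max (-t) 0 := le_max_left _ _
          have := hy.2
          linarith
        · push_neg at h
          have : t ≤ max t 0 := le_max_left _ _
          have := hy.1
          linarith
      simp only [hg, hempty, measure_empty]
    have hind : ∀ t, g t = Set.indicator (Set.Icc (-b) a) g t := by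
      intro t
      by_cases ht : t ∈ Set.Icc (-b) a
      · rw [Set.indicator_of_mem ht]
      · rw [Set.indicator_of_notMem ht, hg0 t ht]
    rw [lintegral_congr hind, lintegral_indicator measurableSet_Icc,
      ← Set.Icc_union_Ioc_eq_Icc (by linarith : (-b:ℝ) ≤ 0) ha]
    rw [lintegral_union measurableSet_Ioc
      (Set.disjoint_left.mpr fun t ht1 ht2 => absurd ht1.2 (not_le.mpr ht2.1))]
    have e1 : ∫⁻ t in Set.Icc (-b) 0, g t
        = ∫⁻ t in Set.Icc (-b) 0, ENNReal.ofReal (Ppoly m a (b + t)) := by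
      refine setLIntegral_congr_fun measurableSet_Icc (fun t ht => ?_)
      rw [Set.mem_Icc] at ht
      have h1 : max t 0 = 0 := max_eq_right ht.2
      have h2 : max (-t) 0 = -t := max_eq_left (by linarith)
      rw [hg]
      simp only [h1, h2, sub_zero, sub_neg_eq_add]
      exact IH a (b + t) ha (by linarith)
    have e2 : ∫⁻ t in Set.Ioc 0 a, g t
        = ∫⁻ t in Set.Ioc 0 a, ENNReal.ofReal (Ppoly m (a - t) b) := by
      refine setLIntegral_congr_fun measurableSet_Ioc (fun t ht => ?_)
      rw [Set.mem_Ioc] at ht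
      have h1 : max t 0 = t := max_eq_left ht.1.le
      have h2 : max (-t) 0 = 0 := max_eq_right (by linarith [ht.1])
      rw [hg]
      simp only [h1, h2, sub_zero]
      exact IH (a - t) b (by linarith [ht.2]) hb
    rw [e1, e2]
    have c1 : Continuous (fun t : ℝ => Ppoly m a (b + t)) :=
      (Ppoly_continuous m a).comp (by fun_prop)
    have c2 : Continuous (fun t : ℝ => Ppoly m (a - t) b) :=
      (Ppoly_continuous' m b).comp (by fun_prop)
    rw [← ofReal_integral_eq_lintegral_ofReal (c1.integrableOn_Icc)
      (ae_restrict_of_forall_mem measurableSet_Icc fun t ht =>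
        Ppoly_nonneg ha (by rw [Set.mem_Icc] at ht; linarith [ht.1]))]
    rw [← ofReal_integral_eq_lintegral_ofReal (c2.integrableOn_Ioc)
      (ae_restrict_of_forall_mem measurableSet_Ioc fun t ht =>
        Ppoly_nonneg (by rw [Set.mem_Ioc] at ht; linarith [ht.2]) hb)]
    rw [int1 m a b hb, int2 m a b ha]
    rw [← ENNReal.ofReal_add
      (Finset.sum_nonneg fun j _ => by have := Pc_nonneg m j; positivity)
      (Finset.sum_nonneg fun j _ => by have := Pc_nonneg m j; positivity)]
    rw [key_alg]


/-- The volume of the convex hull in `ℝ^m` of the `d_a`-ball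
`S_m(r, r) ⊂ ℤ^m` equals `(r^m / m!)·C(2m, m)`. -/

theorem stmt_18 (m r : ℕ) (hm : 1 ≤ m) (hr : 1 ≤ r) :
    MeasureTheory.volume
        {x : Fin m → ℝ | (∑ i, max (x i) 0) ≤ (r : ℝ) ∧ (∑ i, max (-x i) 0) ≤ (r : ℝ)} =
      ENNReal.ofReal ((r : ℝ) ^ m / m.factorial * (2 * m).choose m) := by
  rw [vol_K m r r (by positivity) (by positivity)]
  congr 1
  unfold Ppoly
  have hterm : ∀ j ∈ Finset.range (m + 1),
      Pc m j * (r:ℝ) ^ j * (r:ℝ) ^ (m - j)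
      = (r:ℝ) ^ m / m.factorial * ((m.choose j : ℝ) * (m.choose j)) := by
    intro j hj
    rw [Finset.mem_range] at hj
    have hjm : j ≤ m := by omega
    rw [mul_assoc, ← pow_add, Nat.add_sub_cancel' hjm]
    have key : ((m.choose j : ℝ)) * (j.factorial * (m - j).factorial) = m.factorial := by
      rw [← Nat.cast_mul, ← Nat.cast_mul, ← Nat.choose_mul_factorial_mul_factorial hjm]
      push_cast
      ring
    have h1 : (j.factorial : ℝ) * (m - j).factorial ≠ 0 := by positivity
    have h2 : (m.factorial : ℝ) ≠ 0 := Nat.cast_ne_zero.mpr (Nat.factorial_ne_zero _)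
    have hPc : Pc m j = (m.choose j : ℝ) * (m.choose j) / m.factorial := by
      unfold Pc
      rw [div_eq_div_iff h1 h2, ← key]
      ring
    rw [hPc]
    ring
  rw [Finset.sum_congr rfl hterm, ← Finset.mul_sum]
  congr 1
  have : ∑ j ∈ Finset.range (m + 1), ((m.choose j : ℝ) * (m.choose j))
      = ((2 * m).choose m : ℝ) := by
    rw [two_mul, Nat.add_choose_eq]
    rw [Finset.Nat.sum_antidiagonal_eq_sum_range_succ_mk]
    push_cast
    refine Finset.sum_congr rfl fun j hj => ?_
    rw [Finset.mem_range] at hj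
    rw [Nat.choose_symm (by omega)]
  rw [this]
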